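/- Proposition 1 (rewriting form): let s, t : A and let K = {κ | ⟨s, ∅⟩ ⇀* ⟨t, κ⟩} be the set of explanations computed by probabilistic rewriting (a finite set, since ι and each C i are finite). If K is mutually incompatible, then the probability of s reducing to t equals the sum of the probabilities of its explanations: ∑_{σ a selection with s →_σ* t} P(σ) = ∑_{κ ∈ K} P(κ). -/

import Mathlib

open scoped Classical

/-- A selection `σ` extends a composite choice `κ` if every atomic choice
recorded in `κ` agrees with `σ`. -/
def Extends {ι : Type*} {C : ι → Type*} (σ : ∀ i, C i) (κ : ∀ i, Option (C i)) : Prop :=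
  ∀ i c, κ i = some c → σ i = c

/-- The probability of a selection: product of the probabilities of its choices. -/
def Psel {ι : Type*} [Fintype ι] {C : ι → Type*} (p : ∀ i, C i → ℝ)
    (σ : ∀ i, C i) : ℝ :=
  ∏ i, p i (σ i)

/-- The probability of a composite choice: product of the probabilities of the
atomic choices it records (unassigned rules contribute 1). -/
def Pcc {ι : Type*} [Fintype ι] {C : ι → Type*} (p : ∀ i, C i → ℝ)
    (κ : ∀ i, Option (C i)) : ℝ :=
  ∏ i, (κ i).elim 1 (p i)

/-- Two composite choices are incompatible if they record different alternatives
for some rule. -/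
def Incompatible {ι : Type*} {C : ι → Type*} (κ₁ κ₂ : ∀ i, Option (C i)) : Prop :=
  ∃ i c₁ c₂, c₁ ≠ c₂ ∧ κ₁ i = some c₁ ∧ κ₂ i = some c₂

/-- A set of composite choices is mutually incompatible if any two distinct
elements are incompatible. -/
def MutuallyIncompatible {ι : Type*} {C : ι → Type*}
    (K : Set (∀ i, Option (C i))) : Prop :=
  ∀ κ₁ ∈ K, ∀ κ₂ ∈ K, κ₁ ≠ κ₂ → Incompatible κ₁ κ₂

/-- `CCSubset κ' κ`: every atomic choice recorded in `κ'` is recorded, with the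
same alternative, in `κ`. -/
def CCSubset {ι : Type*} {C : ι → Type*} (κ' κ : ∀ i, Option (C i)) : Prop :=
  ∀ i c, κ' i = some c → κ i = some c

/-- The rewrite relation of the world determined by a selection `σ`:
either a regular step, or a probabilistic step using the alternative chosen by `σ`. -/
def WStep {ι : Type*} {C : ι → Type*} {A : Type*}
    (reg : A → A → Prop) (step : ∀ i, C i → A → A → Prop)
    (σ : ∀ i, C i) (s t : A) : Prop :=
  reg s t ∨ ∃ i, step i (σ i) s t

/-- The probabilistic rewrite relation on pairs of a term and a composite choice. -/
def PStep {ι : Type*} [DecidableEq ι] {C : ι → Type*} {A : Type*}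
    (reg : A → A → Prop) (step : ∀ i, C i → A → A → Prop)
    (x y : A × (∀ i, Option (C i))) : Prop :=
  (reg x.1 y.1 ∧ y.2 = x.2) ∨
  ∃ i c, step i c x.1 y.1 ∧ (x.2 i = none ∨ x.2 i = some c) ∧
    y.2 = Function.update x.2 i (some c)

lemma pstep_subset {ι : Type*} [DecidableEq ι] {C : ι → Type*} {A : Type*}
    {reg : A → A → Prop} {step : ∀ i, C i → A → A → Prop}
    {x y : A × (∀ i, Option (C i))} (h : PStep reg step x y) :
    CCSubset x.2 y.2 := by
  rcases h with ⟨_, h2⟩ | ⟨i, c, _, hcond, h2⟩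
  · intro j c hj; rw [h2]; exact hj
  · intro j c' hj
    rw [h2]
    rcases eq_or_ne j i with rfl | hne
    · rcases hcond with h | h
      · rw [hj] at h; exact absurd h (by simp)
      · rw [hj] at h
        simp [Function.update_self, ← Option.some_inj.mp h]
    · rw [Function.update_of_ne hne]; exact hj

lemma rtg_subset {ι : Type*} [DecidableEq ι] {C : ι → Type*} {A : Type*}
    {reg : A → A → Prop} {step : ∀ i, C i → A → A → Prop}
    {x y : A × (∀ i, Option (C i))}
    (h : Relation.ReflTransGen (PStep reg step) x y) :
    CCSubset x.2 y.2 := by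
  induction h with
  | refl => exact fun i c hc => hc
  | tail _ hstep ih => exact fun i c hc => pstep_subset hstep i c (ih i c hc)

lemma extends_of_subset {ι : Type*} {C : ι → Type*}
    {σ : ∀ i, C i} {κ' κ : ∀ i, Option (C i)}
    (hsub : CCSubset κ' κ) (h : Extends σ κ) : Extends σ κ' :=
  fun i c hc => h i c (hsub i c hc)

lemma rtg_forward {ι : Type*} [DecidableEq ι] {C : ι → Type*} {A : Type*}
    {reg : A → A → Prop} {step : ∀ i, C i → A → A → Prop}
    {σ : ∀ i, C i} {x y : A × (∀ i, Option (C i))}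
    (h : Relation.ReflTransGen (PStep reg step) x y) (hext : Extends σ y.2) :
    Relation.ReflTransGen (WStep reg step σ) x.1 y.1 := by
  induction h with
  | refl => exact Relation.ReflTransGen.refl
  | @tail b c hab hbc ih =>
    have hextb : Extends σ b.2 := extends_of_subset (pstep_subset hbc) hext
    refine Relation.ReflTransGen.tail (ih hextb) ?_
    rcases hbc with ⟨h1, _⟩ | ⟨i, c', hstep, _, h2⟩
    · exact Or.inl h1
    · refine Or.inr ⟨i, ?_⟩
      have : c.2 i = some c' := by rw [h2]; simp
      rw [hext i c' this]
      exact hstep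

lemma rtg_backward {ι : Type*} [DecidableEq ι] {C : ι → Type*} {A : Type*}
    {reg : A → A → Prop} {step : ∀ i, C i → A → A → Prop}
    {σ : ∀ i, C i} {s t : A}
    (h : Relation.ReflTransGen (WStep reg step σ) s t) :
    ∃ κ : ∀ i, Option (C i), Extends σ κ ∧
      Relation.ReflTransGen (PStep reg step) (s, fun _ => none) (t, κ) := by
  induction h with
  | refl =>
    exact ⟨fun _ => none, fun i c hc => by simp at hc, Relation.ReflTransGen.refl⟩
  | @tail b c hab hbc ih =>
    obtain ⟨κ, hext, hrtg⟩ := ih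
    rcases hbc with h1 | ⟨i, hstep⟩
    · exact ⟨κ, hext, Relation.ReflTransGen.tail hrtg (Or.inl ⟨h1, rfl⟩)⟩
    · refine ⟨Function.update κ i (some (σ i)), ?_, ?_⟩
      · intro j c' hj
        rcases eq_or_ne j i with rfl | hne
        · simpa using hj
        · rw [Function.update_of_ne hne] at hj; exact hext j c' hj
      · refine Relation.ReflTransGen.tail hrtg (Or.inr ⟨i, σ i, hstep, ?_, rfl⟩)
        show κ i = none ∨ κ i = some (σ i)
        cases hκi : κ i with
        | none => exact Or.inl rfl
        | some c0 => exact Or.inr (congrArg some (hext i c0 hκi).symm)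

lemma sum_extends_eq_Pcc {ι : Type*} [Fintype ι] [DecidableEq ι] {C : ι → Type*}
    [∀ i, Fintype (C i)] (p : ∀ i, C i → ℝ) (hp1 : ∀ i, ∑ c, p i c = 1)
    (κ : ∀ i, Option (C i)) :
    ∑ σ ∈ Finset.univ.filter (fun σ : ∀ i, C i => Extends σ κ), Psel p σ
      = Pcc p κ := by
  classical
  have hset : Finset.univ.filter (fun σ : ∀ i, C i => Extends σ κ)
      = Fintype.piFinset (fun i => (κ i).elim Finset.univ (fun c => {c})) := by
    ext σ
    rw [Finset.mem_filter]
    simp only [Finset.mem_filter, Finset.mem_univ, true_and, Fintype.mem_piFinset,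
      Extends]
    constructor
    · intro h i
      cases hκi : κ i with
      | none => simp
      | some c => simp [h i c hκi]
    · intro h i c hc
      have := h i
      rw [hc] at this
      simpa using this
  rw [hset]
  simp only [Psel]
  rw [← Finset.prod_univ_sum, Pcc]
  refine Finset.prod_congr rfl fun i _ => ?_
  cases hκi : κ i with
  | none => simpa using hp1 i
  | some c => simp

/-- Proposition 1 (rewriting form): if the set of explanations computed by
probabilistic rewriting for `s →* t` is mutually incompatible, then the
probability of `s` reducing to `t` equals the sum of the probabilities of
its explanations. -/
theorem prob_reachability_eq_sum_explanations
    {ι : Type*} [Fintype ι] [DecidableEq ι]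
    {C : ι → Type*} [∀ i, Fintype (C i)] [∀ i, Nonempty (C i)]
    (p : ∀ i, C i → ℝ) (hp : ∀ i c, 0 ≤ p i c) (hp1 : ∀ i, ∑ c, p i c = 1)
    {A : Type*} (reg : A → A → Prop) (step : ∀ i, C i → A → A → Prop)
    (s t : A)
    (K : Finset (∀ i, Option (C i)))
    (hKdef : ∀ κ : ∀ i, Option (C i), κ ∈ K ↔
      Relation.ReflTransGen (PStep reg step) (s, fun _ => none) (t, κ))
    (hK : MutuallyIncompatible (↑K : Set (∀ i, Option (C i)))) :
    ∑ σ ∈ Finset.univ.filter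
        (fun σ : ∀ i, C i => Relation.ReflTransGen (WStep reg step σ) s t),
        Psel p σ
      = ∑ κ ∈ K, Pcc p κ := by
  classical
  have hset : Finset.univ.filter
      (fun σ : ∀ i, C i => Relation.ReflTransGen (WStep reg step σ) s t)
      = K.biUnion (fun κ => Finset.univ.filter (fun σ : ∀ i, C i => Extends σ κ)) := by
    ext σ
    simp only [Finset.mem_filter, Finset.mem_univ, true_and, Finset.mem_biUnion]
    constructor
    · intro h
      obtain ⟨κ, hext, hrtg⟩ := rtg_backward h
      exact ⟨κ, (hKdef κ).2 hrtg, hext⟩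
    · rintro ⟨κ, hκK, hext⟩
      exact rtg_forward ((hKdef κ).1 hκK) hext
  rw [hset, Finset.sum_biUnion ?_]
  · exact Finset.sum_congr rfl fun κ _ => sum_extends_eq_Pcc p hp1 κ
  · intro κ₁ h₁ κ₂ h₂ hne
    obtain ⟨i, c₁, c₂, hc, hκ₁, hκ₂⟩ := hK κ₁ h₁ κ₂ h₂ hne
    refine Finset.disjoint_left.2 fun σ hσ₁ hσ₂ => ?_
    simp only [Finset.mem_filter, Finset.mem_univ, true_and] at hσ₁ hσ₂
    exact hc ((hσ₁ i c₁ hκ₁) ▸ (hσ₂ i c₂ hκ₂) ▸ rfl)
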